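/- Transport theorem: let p be a permutation of {1,…,k} and let [p] = {x Cayley permutation of length k : st(x) = p}. Then for every n ≥ 0, standardization is a bijection from the set of primitive modified ascent sequences of length n that avoid every pattern in [p] onto the set of permutations in Ω_n that avoid the classical pattern p. -/

import Mathlib

/-- A Cayley permutation of length `n`: a word whose set of values is `{1, …, k}`
for some `k ≤ n`. -/
def IsCayley {n : ℕ} (x : Fin n → ℕ) : Prop :=
  ∃ k, k ≤ n ∧ Set.range x = Set.Icc 1 k

/-- Ascent tops of `x`: indices `i` with `i = 0` or `x (i-1) < x i`. -/
def AscTops {n : ℕ} (x : Fin n → ℕ) : Set (Fin n) :=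
  {i | ∀ j : Fin n, (j : ℕ) + 1 = (i : ℕ) → x j < x i}

/-- Leftmost copies of `x`: indices `i` such that the value `x i` does not occur earlier. -/
def Nub {n : ℕ} (x : Fin n → ℕ) : Set (Fin n) :=
  {i | ∀ j : Fin n, j < i → x j ≠ x i}

/-- A modified ascent sequence: a Cayley permutation whose ascent tops
are exactly its leftmost copies. -/
def IsModasc {n : ℕ} (x : Fin n → ℕ) : Prop :=
  IsCayley x ∧ AscTops x = Nub x

/-- `x` has no flat steps (no two consecutive equal entries). -/
def NoFlat {n : ℕ} (x : Fin n → ℕ) : Prop :=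
  ∀ i j : Fin n, (j : ℕ) = (i : ℕ) + 1 → x i ≠ x j

/-- A primitive modified ascent sequence. -/
def IsPrim {n : ℕ} (x : Fin n → ℕ) : Prop :=
  IsModasc x ∧ NoFlat x

/-- The word `x` contains the pattern `y`. -/
def Contains {n k : ℕ} (x : Fin n → ℕ) (y : Fin k → ℕ) : Prop :=
  ∃ f : Fin k → Fin n, StrictMono f ∧ ∀ s t, y s < y t ↔ x (f s) < x (f t)

/-- The word `x` avoids the pattern `y`. -/
def Avoids {n k : ℕ} (x : Fin n → ℕ) (y : Fin k → ℕ) : Prop :=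
  ¬ Contains x y

/-- Standardization: `(Std x) i = #{j : x j < x i} + #{j ≤ i : x j = x i}`. -/
def Std {n : ℕ} (x : Fin n → ℕ) : Fin n → ℕ :=
  fun i => (Finset.univ.filter fun j => x j < x i).card +
    (Finset.univ.filter fun j => j ≤ i ∧ x j = x i).card

/-- `p` is a permutation of `{1, …, n}` (written as a word). -/
def IsPerm {n : ℕ} (p : Fin n → ℕ) : Prop :=
  Function.Injective p ∧ Set.range p = Set.Icc 1 n

/-- `p` contains the bivincular pattern `ω = (321, {1}, {1})`:
there are `i` and `j` with `i + 1 < j`, `p i > p (i+1)` and `p (i+1) = p j + 1`. -/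
def ContainsOmega {n : ℕ} (p : Fin n → ℕ) : Prop :=
  ∃ (i j : Fin n) (hi : (i : ℕ) + 1 < n),
    (i : ℕ) + 1 < (j : ℕ) ∧ p ⟨(i : ℕ) + 1, hi⟩ < p i ∧ p ⟨(i : ℕ) + 1, hi⟩ = p j + 1

/-- Membership in `Ω_n`: a permutation of `{1, …, n}` whose first entry is `1`
and which avoids the bivincular pattern `ω`. -/
def InOmega {n : ℕ} (p : Fin n → ℕ) : Prop :=
  IsPerm p ∧ (∀ h : 0 < n, p ⟨0, h⟩ = 1) ∧ ¬ ContainsOmega p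

theorem std_eq_card {n : ℕ} (x : Fin n → ℕ) (i : Fin n) :
    Std x i = (Finset.univ.filter fun j => x j < x i ∨ (x j = x i ∧ j ≤ i)).card := by
  classical
  rw [Std]
  rw [Finset.filter_or]
  rw [Finset.card_union_of_disjoint]
  · congr 1
    congr 1
    ext j
    simp [and_comm]
  · rw [Finset.disjoint_filter]
    intro j _ h1 h2
    omega

theorem std_subset_aux {n : ℕ} (x : Fin n → ℕ) {a b : Fin n}
    (h : x a < x b ∨ (x a = x b ∧ a ≤ b)) :
    (Finset.univ.filter fun j => x j < x a ∨ (x j = x a ∧ j ≤ a)) ⊆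
      (Finset.univ.filter fun j => x j < x b ∨ (x j = x b ∧ j ≤ b)) := by
  classical
  intro j hj
  simp only [Finset.mem_filter, Finset.mem_univ, true_and] at hj ⊢
  rcases hj with hj | ⟨hj, hle⟩
  · rcases h with h | ⟨h, _⟩
    · left; omega
    · left; omega
  · rcases h with h | ⟨h, hab⟩
    · left; omega
    · right; exact ⟨by omega, le_trans hle hab⟩

theorem std_le {n : ℕ} (x : Fin n → ℕ) {a b : Fin n}
    (h : x a < x b ∨ (x a = x b ∧ a ≤ b)) : Std x a ≤ Std x b := by
  classical
  rw [std_eq_card, std_eq_card]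
  exact Finset.card_le_card (std_subset_aux x h)

theorem std_lt {n : ℕ} (x : Fin n → ℕ) {a b : Fin n}
    (h : x a < x b ∨ (x a = x b ∧ a < b)) : Std x a < Std x b := by
  classical
  rw [std_eq_card, std_eq_card]
  apply Finset.card_lt_card
  rw [Finset.ssubset_iff_of_subset]
  · refine ⟨b, by simp, ?_⟩
    simp only [Finset.mem_filter, Finset.mem_univ, true_and]
    rintro (hb | ⟨hb, hba⟩)
    · rcases h with h | ⟨h, _⟩ <;> omega
    · rcases h with h | ⟨h, hab⟩
      · omega
      · have : a = b := le_antisymm hab.le hba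
        exact absurd this (ne_of_lt hab)
  · rcases h with h | ⟨h, hab⟩
    · exact std_subset_aux x (Or.inl h)
    · exact std_subset_aux x (Or.inr ⟨h, hab.le⟩)

theorem std_lt_iff {n : ℕ} (x : Fin n → ℕ) (a b : Fin n) :
    Std x a < Std x b ↔ (x a < x b ∨ (x a = x b ∧ a < b)) := by
  constructor
  · intro h
    by_contra hc
    push_neg at hc
    obtain ⟨h1, h2⟩ := hc
    rcases lt_trichotomy (x a) (x b) with h3 | h3 | h3
    · exact absurd h3 (by omega)
    · rcases lt_trichotomy a b with h4 | h4 | h4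
      · have := h2 h3; omega
      · subst h4; exact lt_irrefl _ h
      · have := std_le x (b := a) (Or.inr ⟨h3.symm, h4.le⟩)
        omega
    · have := std_le x (b := a) (Or.inl h3)
      omega
  · exact std_lt x

theorem std_inj {n : ℕ} (x : Fin n → ℕ) : Function.Injective (Std x) := by
  intro a b h
  by_contra hne
  rcases lt_trichotomy (x a) (x b) with h3 | h3 | h3
  · have := std_lt x (Or.inl h3); omega
  · rcases lt_trichotomy a b with h4 | h4 | h4
    · have := std_lt x (Or.inr ⟨h3, h4⟩); omega
    · exact hne h4
    · have := std_lt x (b := a) (Or.inr ⟨h3.symm, h4⟩); omega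
  · have := std_lt x (b := a) (Or.inl h3); omega

theorem std_mem {n : ℕ} (x : Fin n → ℕ) (i : Fin n) : 1 ≤ Std x i ∧ Std x i ≤ n := by
  classical
  rw [std_eq_card x i]
  constructor
  · rw [Nat.one_le_iff_ne_zero, ← Nat.pos_iff_ne_zero, Finset.card_pos]
    exact ⟨i, by simp⟩
  · calc (Finset.univ.filter fun j => x j < x i ∨ (x j = x i ∧ j ≤ i)).card
        ≤ (Finset.univ : Finset (Fin n)).card := Finset.card_le_card (Finset.filter_subset _ _)
    _ = n := by simp

theorem std_isPerm {n : ℕ} (x : Fin n → ℕ) : IsPerm (Std x) := by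
  classical
  refine ⟨std_inj x, ?_⟩
  have himg : Finset.univ.image (Std x) = Finset.Icc 1 n := by
    apply Finset.eq_of_subset_of_card_le
    · intro v hv
      simp only [Finset.mem_image] at hv
      obtain ⟨i, _, rfl⟩ := hv
      simp only [Finset.mem_Icc]
      exact std_mem x i
    · rw [Nat.card_Icc, Finset.card_image_of_injective _ (std_inj x)]
      simp
  ext v
  constructor
  · rintro ⟨i, rfl⟩
    have : Std x i ∈ Finset.Icc 1 n := himg ▸ Finset.mem_image_of_mem _ (Finset.mem_univ i)
    simpa using this
  · intro hv
    have : v ∈ Finset.Icc 1 n := by simpa using hv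
    rw [← himg] at this
    simp only [Finset.mem_image, Finset.mem_univ, true_and] at this
    obtain ⟨i, hi⟩ := this
    exact ⟨i, hi⟩

theorem perm_range {n : ℕ} {q : Fin n → ℕ} (hq : IsPerm q) (v : ℕ) :
    (∃ j, q j = v) ↔ (1 ≤ v ∧ v ≤ n) := by
  have := hq.2
  constructor
  · rintro ⟨j, rfl⟩
    have : q j ∈ Set.Icc 1 n := this ▸ Set.mem_range_self j
    simpa using this
  · intro hv
    have : v ∈ Set.range q := this ▸ (by simpa using hv : v ∈ Set.Icc 1 n)
    exact this

theorem perm_count {n : ℕ} {q : Fin n → ℕ} (hq : IsPerm q) (P : ℕ → Prop) [DecidablePred P] :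
    (Finset.univ.filter fun j => P (q j)).card = ((Finset.Icc 1 n).filter P).card := by
  classical
  apply Finset.card_bij (fun j _ => q j)
  · intro j hj
    simp only [Finset.mem_filter, Finset.mem_univ, true_and] at hj
    simp only [Finset.mem_filter, Finset.mem_Icc]
    exact ⟨(perm_range hq (q j)).1 ⟨j, rfl⟩, hj⟩
  · intro a ha b hb hab
    exact hq.1 hab
  · intro v hv
    simp only [Finset.mem_filter, Finset.mem_Icc] at hv
    obtain ⟨j, rfl⟩ := (perm_range hq v).2 hv.1
    exact ⟨j, by simp [hv.2]⟩

theorem perm_val {n : ℕ} {q : Fin n → ℕ} (hq : IsPerm q) (s : Fin n) :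
    q s = (Finset.univ.filter fun t => q t ≤ q s).card := by
  classical
  rw [perm_count hq (fun v => v ≤ q s)]
  have h1 : (Finset.Icc 1 n).filter (fun v => v ≤ q s) = Finset.Icc 1 (q s) := by
    ext v
    simp only [Finset.mem_filter, Finset.mem_Icc]
    have := (perm_range hq (q s)).1 ⟨s, rfl⟩
    omega
  rw [h1, Nat.card_Icc]
  omega

theorem perm_ext {n : ℕ} {q q' : Fin n → ℕ} (hq : IsPerm q) (hq' : IsPerm q')
    (h : ∀ s t, q s < q t ↔ q' s < q' t) : q = q' := by
  classical
  funext s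
  rw [perm_val hq s, perm_val hq' s]
  congr 1
  ext t
  simp only [Finset.mem_filter, Finset.mem_univ, true_and]
  have := h s t
  omega

theorem contains_std {n k : ℕ} {x : Fin n → ℕ} {q p : Fin k → ℕ}
    (hc : Contains x q) (hstd : Std q = p) : Contains (Std x) p := by
  obtain ⟨f, hf, hiff⟩ := hc
  refine ⟨f, hf, fun s t => ?_⟩
  rw [← hstd, std_lt_iff q s t, std_lt_iff x (f s) (f t)]
  have e1 := hiff s t
  have e2 := hiff t s
  have e3 : s < t ↔ f s < f t := hf.lt_iff_lt.symm
  constructor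
  · rintro (h | ⟨h1, h2⟩)
    · left; exact e1.1 h
    · right
      refine ⟨by omega, e3.1 h2⟩
  · rintro (h | ⟨h1, h2⟩)
    · left; exact e1.2 h
    · right
      refine ⟨by omega, e3.2 h2⟩

theorem count_mem_le {S : Finset ℕ} {v : ℕ} (hv : v ∈ S) :
    1 ≤ (S.filter (· ≤ v)).card := by
  classical
  rw [Nat.one_le_iff_ne_zero, ← Nat.pos_iff_ne_zero, Finset.card_pos]
  exact ⟨v, by simp [hv]⟩

theorem count_mono {S : Finset ℕ} {v w : ℕ} (h : v ≤ w) :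
    (S.filter (· ≤ v)).card ≤ (S.filter (· ≤ w)).card := by
  classical
  apply Finset.card_le_card
  intro a ha
  simp only [Finset.mem_filter] at ha ⊢
  exact ⟨ha.1, le_trans ha.2 h⟩

theorem count_step (S : Finset ℕ) (v : ℕ) :
    (S.filter (· ≤ v + 1)).card
      = (S.filter (· ≤ v)).card + (if v + 1 ∈ S then 1 else 0) := by
  classical
  by_cases h : v + 1 ∈ S
  · rw [if_pos h]
    have : S.filter (· ≤ v + 1) = insert (v + 1) (S.filter (· ≤ v)) := by
      ext a
      simp only [Finset.mem_filter, Finset.mem_insert]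
      constructor
      · rintro ⟨ha, hle⟩
        rcases Nat.lt_or_ge a (v + 1) with h' | h'
        · right; exact ⟨ha, by omega⟩
        · left; omega
      · rintro (rfl | ⟨ha, hle⟩)
        · exact ⟨h, le_refl _⟩
        · exact ⟨ha, by omega⟩
    rw [this, Finset.card_insert_of_notMem (by simp)]
  · rw [if_neg h]
    congr 1
    have hne : ∀ a ∈ S, a ≠ v + 1 := fun a ha he => h (he ▸ ha)
    ext a
    simp only [Finset.mem_filter]
    constructor
    · rintro ⟨ha, hle⟩
      have := hne a ha
      exact ⟨ha, by omega⟩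
    · rintro ⟨ha, hle⟩
      exact ⟨ha, by omega⟩

theorem count_exists {S : Finset ℕ} {r : ℕ} (h1 : 1 ≤ r) (h2 : r ≤ S.card) :
    ∃ v ∈ S, (S.filter (· ≤ v)).card = r := by
  classical
  have hB : S.filter (· ≤ S.sup id) = S := by
    apply Finset.filter_true_of_mem
    intro a ha
    exact Finset.le_sup (f := id) ha
  have hPB : r ≤ (S.filter (· ≤ S.sup id)).card := by rw [hB]; exact h2
  have hex : ∃ v, r ≤ (S.filter (· ≤ v)).card := ⟨_, hPB⟩
  rcases hv : Nat.find hex with _ | u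
  · have hfind : r ≤ (S.filter (· ≤ 0)).card := hv ▸ Nat.find_spec hex
    have hsub : S.filter (· ≤ 0) ⊆ {0} := by
      intro a ha
      simp only [Finset.mem_filter] at ha
      simp only [Finset.mem_singleton]
      omega
    have hcard : (S.filter (· ≤ 0)).card ≤ 1 := by
      calc (S.filter (· ≤ 0)).card ≤ ({0} : Finset ℕ).card := Finset.card_le_card hsub
      _ = 1 := rfl
    have h0 : 0 ∈ S := by
      have : (S.filter (· ≤ 0)).Nonempty := Finset.card_pos.1 (by omega)
      obtain ⟨a, ha⟩ := this
      simp only [Finset.mem_filter] at ha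
      rw [show (0:ℕ) = a by omega]
      exact ha.1
    exact ⟨0, h0, by omega⟩
  · have hfind : r ≤ (S.filter (· ≤ u + 1)).card := hv ▸ Nat.find_spec hex
    have hu : ¬ r ≤ (S.filter (· ≤ u)).card := Nat.find_min hex (by omega)
    have hstep := count_step S u
    have hmem : u + 1 ∈ S := by
      by_contra hc
      rw [if_neg hc] at hstep
      omega
    rw [if_pos hmem] at hstep
    exact ⟨u + 1, hmem, by omega⟩

theorem exists_pattern {n k : ℕ} {x : Fin n → ℕ} {p : Fin k → ℕ} (hp : IsPerm p)
    (hc : Contains (Std x) p) : ∃ q : Fin k → ℕ, IsCayley q ∧ Std q = p ∧ Contains x q := by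
  classical
  obtain ⟨f, hf, hiff⟩ := hc
  set y : Fin k → ℕ := fun s => x (f s) with hy
  set S : Finset ℕ := Finset.univ.image y with hS
  set q : Fin k → ℕ := fun s => (S.filter (· ≤ y s)).card with hq
  have hmemS : ∀ s, y s ∈ S := fun s => Finset.mem_image_of_mem _ (Finset.mem_univ s)
  have hql : ∀ s, 1 ≤ q s := fun s => count_mem_le (hmemS s)
  have hqu : ∀ s, q s ≤ S.card := fun s => Finset.card_le_card (Finset.filter_subset _ _)
  have hlt : ∀ s t, q s < q t ↔ y s < y t := by
    intro s t
    constructor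
    · intro h
      by_contra hc'
      push_neg at hc'
      have := count_mono (S := S) hc'
      simp only [hq] at h
      omega
    · intro h
      have h1 : (S.filter (· ≤ y s)).card < (S.filter (· ≤ y t)).card := by
        apply Finset.card_lt_card
        rw [Finset.ssubset_iff_of_subset]
        · refine ⟨y t, by simp [hmemS t], ?_⟩
          simp only [Finset.mem_filter]
          rintro ⟨-, hle⟩
          omega
        · intro a ha
          simp only [Finset.mem_filter] at ha ⊢
          exact ⟨ha.1, by omega⟩
      exact h1
  have hcayley : IsCayley q := by
    refine ⟨S.card, ?_, ?_⟩
    · calc S.card ≤ (Finset.univ : Finset (Fin k)).card := Finset.card_image_le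
      _ = k := by simp
    · ext r
      simp only [Set.mem_range, Set.mem_Icc]
      constructor
      · rintro ⟨s, rfl⟩
        exact ⟨hql s, hqu s⟩
      · rintro ⟨hr1, hr2⟩
        obtain ⟨v, hv, hcard⟩ := count_exists hr1 hr2
        rw [hS] at hv
        simp only [Finset.mem_image, Finset.mem_univ, true_and] at hv
        obtain ⟨s, rfl⟩ := hv
        exact ⟨s, hcard⟩
  have hlt' : ∀ s t, q s < q t ↔ x (f s) < x (f t) := fun s t => hlt s t
  have hcont : Contains x q := ⟨f, hf, fun s t => hlt' s t⟩
  refine ⟨q, hcayley, ?_, hcont⟩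
  apply perm_ext (std_isPerm q) hp
  intro s t
  rw [std_lt_iff q s t, hiff s t, std_lt_iff x (f s) (f t)]
  have e3 : s < t ↔ f s < f t := hf.lt_iff_lt.symm
  have e1 := hlt' s t
  have e2 := hlt' t s
  constructor
  · rintro (h | ⟨h1, h2⟩)
    · left; exact e1.1 h
    · right; exact ⟨by omega, e3.1 h2⟩
  · rintro (h | ⟨h1, h2⟩)
    · left; exact e1.2 h
    · right; exact ⟨by omega, e3.2 h2⟩

theorem cayley_pos {n : ℕ} {x : Fin n → ℕ} (hx : IsCayley x) (j : Fin n) : 1 ≤ x j := by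
  obtain ⟨k', _, hr⟩ := hx
  have : x j ∈ Set.Icc 1 k' := hr ▸ Set.mem_range_self j
  exact this.1

theorem prim_first {n : ℕ} {x : Fin n → ℕ} (hx : IsPrim x) (h : 0 < n) : x ⟨0, h⟩ = 1 := by
  obtain ⟨⟨hcay, hmod⟩, hflat⟩ := hx
  obtain ⟨k', hk', hr⟩ := hcay
  have hk1 : 1 ≤ k' := by
    have : x ⟨0, h⟩ ∈ Set.Icc 1 k' := hr ▸ Set.mem_range_self _
    have := this.2
    have := cayley_pos ⟨k', hk', hr⟩ ⟨0, h⟩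
    omega
  have h1mem : (1 : ℕ) ∈ Set.range x := by
    rw [hr]; exact Set.mem_Icc.2 ⟨le_refl _, hk1⟩
  obtain ⟨i0, hi0⟩ := h1mem
  have hex : ∃ m : ℕ, ∃ hm : m < n, x ⟨m, hm⟩ = 1 := ⟨i0, i0.2, by simpa using hi0⟩
  classical
  set m := Nat.find hex with hm
  obtain ⟨hmn, hxm⟩ := Nat.find_spec hex
  have hnub : (⟨m, hmn⟩ : Fin n) ∈ Nub x := by
    intro j hj he
    have : x j = 1 := by rw [he, hxm]
    exact absurd this (by
      intro hc
      exact Nat.find_min hex (m := (j : ℕ)) hj ⟨j.2, by simpa using hc⟩)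
  have hasc : (⟨m, hmn⟩ : Fin n) ∈ AscTops x := hmod ▸ hnub
  by_cases hm0 : m = 0
  · have : (⟨0, h⟩ : Fin n) = ⟨m, hmn⟩ := by simp [hm0]
    rw [this, hxm]
  · exfalso
    have hj : m - 1 < n := by omega
    have := hasc ⟨m - 1, hj⟩ (by simp; omega)
    rw [hxm] at this
    have := cayley_pos ⟨k', hk', hr⟩ ⟨m - 1, hj⟩
    omega

theorem std_first {n : ℕ} {x : Fin n → ℕ} (hx : IsPrim x) (h : 0 < n) :
    Std x ⟨0, h⟩ = 1 := by
  classical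
  rw [Std]
  have hx0 : x ⟨0, h⟩ = 1 := prim_first hx h
  have h1 : (Finset.univ.filter fun j => x j < x ⟨0, h⟩) = ∅ := by
    ext j
    simp only [Finset.mem_filter, Finset.mem_univ, true_and, Finset.notMem_empty, iff_false]
    have := cayley_pos hx.1.1 j
    omega
  have h2 : (Finset.univ.filter fun j => j ≤ (⟨0, h⟩ : Fin n) ∧ x j = x ⟨0, h⟩)
      = {⟨0, h⟩} := by
    ext j
    simp only [Finset.mem_filter, Finset.mem_univ, true_and, Finset.mem_singleton]
    constructor
    · rintro ⟨hj, -⟩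
      exact le_antisymm hj (Fin.mk_le_mk.2 (Nat.zero_le _))
    · rintro rfl
      exact ⟨le_refl _, rfl⟩
  rw [h1, h2]
  simp

theorem prev_occ {n : ℕ} (x : Fin n → ℕ) {i : Fin n}
    (h : ∃ t, t < i ∧ x t = x i) : ∃ t, t < i ∧ x t = x i ∧ Std x t + 1 = Std x i := by
  classical
  set T : Finset (Fin n) := Finset.univ.filter (fun t => t < i ∧ x t = x i) with hT
  have hTne : T.Nonempty := by
    obtain ⟨t, ht1, ht2⟩ := h
    exact ⟨t, by simp [hT, ht1, ht2]⟩
  set t' := T.max' hTne with ht'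
  have ht'mem : t' ∈ T := T.max'_mem hTne
  simp only [hT, Finset.mem_filter, Finset.mem_univ, true_and] at ht'mem
  obtain ⟨ht'lt, ht'eq⟩ := ht'mem
  refine ⟨t', ht'lt, ht'eq, ?_⟩
  rw [Std, Std]
  have e1 : (Finset.univ.filter fun j => x j < x t') = (Finset.univ.filter fun j => x j < x i) := by
    rw [ht'eq]
  have e2 : (Finset.univ.filter fun j => j ≤ i ∧ x j = x i)
      = insert i (Finset.univ.filter fun j => j ≤ t' ∧ x j = x t') := by
    ext j
    simp only [Finset.mem_filter, Finset.mem_univ, true_and, Finset.mem_insert]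
    constructor
    · rintro ⟨hj, hje⟩
      rcases eq_or_lt_of_le hj with he | hlt
      · left; exact he
      · right
        refine ⟨?_, by rw [hje, ht'eq]⟩
        apply Finset.le_max'
        simp [hT, hlt, hje]
    · rintro (rfl | ⟨hj, hje⟩)
      · exact ⟨le_refl _, rfl⟩
      · exact ⟨le_trans hj ht'lt.le, by rw [hje, ht'eq]⟩
  have hnotmem : i ∉ (Finset.univ.filter fun j => j ≤ t' ∧ x j = x t') := by
    simp only [Finset.mem_filter, Finset.mem_univ, true_and, not_and]
    intro hle
    exact absurd (le_antisymm hle ht'lt.le) (ne_of_gt ht'lt)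
  rw [e1, e2, Finset.card_insert_of_notMem hnotmem]
  omega

theorem prim_inOmega {n : ℕ} {x : Fin n → ℕ} (hx : IsPrim x) : InOmega (Std x) := by
  refine ⟨std_isPerm x, fun h => std_first hx h, ?_⟩
  rintro ⟨i, j, hi, hij, h1, h2⟩
  set i1 : Fin n := ⟨(i : ℕ) + 1, hi⟩ with hi1
  have hdesc : x i1 < x i := by
    rcases (std_lt_iff x i1 i).1 h1 with h | ⟨-, hlt⟩
    · exact h
    · exfalso
      have hv : (i1 : ℕ) = (i : ℕ) + 1 := rfl
      have := Fin.lt_def.mp hlt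
      omega
  have hnotasc : i1 ∉ AscTops x := by
    intro hmem
    have := hmem i (by simp [hi1])
    omega
  have hnotnub : i1 ∉ Nub x := hx.1.2 ▸ hnotasc
  have hex : ∃ t, t < i1 ∧ x t = x i1 := by
    by_contra hc
    push_neg at hc
    exact hnotnub (fun t ht => fun he => (hc t ht) he)
  obtain ⟨t', hlt', -, hstd'⟩ := prev_occ x hex
  have : Std x t' = Std x j := by omega
  have htj : t' = j := std_inj x this
  have : (t' : ℕ) < (i : ℕ) + 1 := hlt'
  omega

def DescVal {n : ℕ} (q : Fin n → ℕ) (w : ℕ) : Prop :=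
  ∃ i j : Fin n, (j : ℕ) + 1 = (i : ℕ) ∧ q i = w ∧ q i < q j

open Classical in
noncomputable def cnt {n : ℕ} (q : Fin n → ℕ) (w : ℕ) : ℕ :=
  ((Finset.Icc 1 w).filter (fun v => ¬ DescVal q v)).card

theorem cnt_mono {n : ℕ} (q : Fin n → ℕ) {w w' : ℕ} (h : w ≤ w') : cnt q w ≤ cnt q w' := by
  classical
  rw [cnt, cnt]
  apply Finset.card_le_card
  apply Finset.filter_subset_filter
  intro a ha
  simp only [Finset.mem_Icc] at ha ⊢
  omega

theorem cnt_le {n : ℕ} (q : Fin n → ℕ) (w : ℕ) : cnt q w ≤ w := by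
  classical
  rw [cnt]
  calc ((Finset.Icc 1 w).filter (fun v => ¬ DescVal q v)).card
      ≤ (Finset.Icc 1 w).card := Finset.card_le_card (Finset.filter_subset _ _)
  _ = w := by rw [Nat.card_Icc]; omega

theorem cnt_zero {n : ℕ} (q : Fin n → ℕ) : cnt q 0 = 0 := by
  classical
  rw [cnt]
  simp

open Classical in
theorem cnt_step {n : ℕ} (q : Fin n → ℕ) (w : ℕ) :
    cnt q (w + 1) = cnt q w + (if DescVal q (w + 1) then 0 else 1) := by
  classical
  rw [cnt, cnt]
  have hicc : Finset.Icc 1 (w + 1) = insert (w + 1) (Finset.Icc 1 w) := by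
    ext a
    simp only [Finset.mem_Icc, Finset.mem_insert]
    omega
  rw [hicc, Finset.filter_insert]
  by_cases h : DescVal q (w + 1)
  · rw [if_neg (not_not_intro h), if_pos h]
    omega
  · rw [if_pos h, if_neg h, Finset.card_insert_of_notMem (by simp)]

theorem cnt_squeeze {n : ℕ} (q : Fin n → ℕ) {u w v : ℕ} (h1 : u ≤ w) (h2 : w ≤ v)
    (h : cnt q u = cnt q v) : cnt q w = cnt q u := by
  have a1 := cnt_mono q h1
  have a2 := cnt_mono q h2
  omega

theorem cnt_desc_iff {n : ℕ} (q : Fin n → ℕ) (w : ℕ) :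
    cnt q (w + 1) = cnt q w ↔ DescVal q (w + 1) := by
  classical
  have := cnt_step q w
  by_cases h : DescVal q (w + 1)
  · simp only [if_pos h] at this
    constructor
    · intro _; exact h
    · intro _; omega
  · simp only [if_neg h] at this
    constructor
    · intro h2; omega
    · intro h2; exact absurd h2 h

theorem descval_one {n : ℕ} {q : Fin n → ℕ} (hq : InOmega q) : ¬ DescVal q 1 := by
  rintro ⟨i, j, hji, hqi, hlt⟩
  have hn : 0 < n := i.pos
  have h0 : q ⟨0, hn⟩ = 1 := hq.2.1 hn
  have : i = ⟨0, hn⟩ := hq.1.1 (by rw [hqi, h0])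
  rw [this] at hji
  simp at hji

theorem descval_step {n : ℕ} {q : Fin n → ℕ} (hq : InOmega q) {a b : Fin n}
    (hab : q b = q a + 1) (hd : DescVal q (q b)) : a < b := by
  obtain ⟨i, j, hji, hqi, hlt⟩ := hd
  have hib : i = b := hq.1.1 hqi
  subst hib
  rcases lt_trichotomy a i with h | h | h
  · exact h
  · subst h; omega
  · exfalso
    apply hq.2.2
    have hilt : (j : ℕ) + 1 < n := by rw [hji]; exact i.2
    refine ⟨j, a, hilt, ?_, ?_, ?_⟩
    · have : (i : ℕ) < (a : ℕ) := h
      omega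
    · have he : (⟨(j : ℕ) + 1, hilt⟩ : Fin n) = i := Fin.ext hji
      rw [he]; exact hlt
    · have he : (⟨(j : ℕ) + 1, hilt⟩ : Fin n) = i := Fin.ext hji
      rw [he]; omega

theorem block_le {n : ℕ} {q : Fin n → ℕ} (hq : InOmega q) :
    ∀ d (a b : Fin n), q b = q a + d → cnt q (q a) = cnt q (q b) → a ≤ b := by
  intro d
  induction d with
  | zero =>
    intro a b hab _
    exact le_of_eq (hq.1.1 (by omega)).symm
  | succ d ih =>
    intro a b hab hcnt
    have hbn : q b ≤ n := ((perm_range hq.1 (q b)).1 ⟨b, rfl⟩).2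
    have ha1 : 1 ≤ q a := ((perm_range hq.1 (q a)).1 ⟨a, rfl⟩).1
    obtain ⟨c, hc⟩ := (perm_range hq.1 (q a + d)).2 (by omega)
    have hsq : cnt q (q c) = cnt q (q a) := by
      rw [hc]
      exact cnt_squeeze q (by omega) (by omega) hcnt
    have hdesc : DescVal q (q b) := by
      have h1 : cnt q (q c + 1) = cnt q (q c) := by
        rw [hsq, show q c + 1 = q b by omega, hcnt]
      have := (cnt_desc_iff q (q c)).1 h1
      rwa [show q c + 1 = q b by omega] at this
    have hcb : c < b := descval_step hq (by omega) hdesc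
    have hac : a ≤ c := ih a c (by omega) hsq.symm
    exact le_of_lt (lt_of_le_of_lt hac hcb)

theorem block_lt {n : ℕ} {q : Fin n → ℕ} (hq : InOmega q) {a b : Fin n}
    (hlt : q a < q b) (hcnt : cnt q (q a) = cnt q (q b)) : a < b := by
  have hbn : q b ≤ n := ((perm_range hq.1 (q b)).1 ⟨b, rfl⟩).2
  have ha1 : 1 ≤ q a := ((perm_range hq.1 (q a)).1 ⟨a, rfl⟩).1
  obtain ⟨c, hc⟩ := (perm_range hq.1 (q b - 1)).2 (by omega)
  have hsq : cnt q (q c) = cnt q (q a) := by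
    rw [hc]
    exact cnt_squeeze q (by omega) (by omega) hcnt
  have hdesc : DescVal q (q b) := by
    have h1 : cnt q (q c + 1) = cnt q (q c) := by
      rw [hsq, show q c + 1 = q b by omega, hcnt]
    have := (cnt_desc_iff q (q c)).1 h1
    rwa [show q c + 1 = q b by omega] at this
  have hcb : c < b := descval_step hq (by omega) hdesc
  have hac : a ≤ c := block_le hq (q c - q a) a c (by omega) hsq.symm
  exact lt_of_le_of_lt hac hcb

theorem block_order {n : ℕ} {q : Fin n → ℕ} (hq : InOmega q) {a b : Fin n}
    (hcnt : cnt q (q a) = cnt q (q b)) : a ≤ b ↔ q a ≤ q b := by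
  constructor
  · intro h
    by_contra hc
    push_neg at hc
    have := block_lt hq hc hcnt.symm
    exact absurd h (not_le.2 this)
  · intro h
    rcases eq_or_lt_of_le h with he | hlt
    · exact le_of_eq (hq.1.1 he)
    · exact (block_lt hq hlt hcnt).le

theorem cnt_surj {n : ℕ} (q : Fin n → ℕ) {r : ℕ} (h1 : 1 ≤ r) (h2 : r ≤ cnt q n) :
    ∃ w, 1 ≤ w ∧ w ≤ n ∧ cnt q w = r := by
  classical
  have hex : ∃ w, r ≤ cnt q w := ⟨n, h2⟩
  rcases hfind : Nat.find hex with _ | u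
  · exfalso
    have : r ≤ cnt q 0 := hfind ▸ Nat.find_spec hex
    rw [cnt_zero] at this
    omega
  · have hspec : r ≤ cnt q (u + 1) := hfind ▸ Nat.find_spec hex
    have hu : ¬ r ≤ cnt q u := Nat.find_min hex (by omega)
    have hstep := cnt_step q u
    have hle : Nat.find hex ≤ n := Nat.find_le h2
    refine ⟨u + 1, by omega, by omega, ?_⟩
    by_cases hd : DescVal q (u + 1)
    · rw [if_pos hd] at hstep; omega
    · rw [if_neg hd] at hstep; omega

theorem cnt_one {n : ℕ} {q : Fin n → ℕ} (hq : InOmega q) : cnt q 1 = 1 := by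
  classical
  rw [cnt]
  rw [Finset.Icc_self, Finset.filter_singleton, if_pos (descval_one hq)]
  rfl

theorem omega_q_pos {n : ℕ} {q : Fin n → ℕ} (hq : InOmega q) (i : Fin n) :
    1 ≤ q i ∧ q i ≤ n := (perm_range hq.1 (q i)).1 ⟨i, rfl⟩

theorem omega_x_pos {n : ℕ} {q : Fin n → ℕ} (hq : InOmega q) (i : Fin n) :
    1 ≤ cnt q (q i) := by
  have h := omega_q_pos hq i
  calc 1 = cnt q 1 := (cnt_one hq).symm
  _ ≤ cnt q (q i) := cnt_mono q h.1

theorem omega_cayley {n : ℕ} {q : Fin n → ℕ} (hq : InOmega q) :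
    IsCayley (fun i => cnt q (q i)) := by
  refine ⟨cnt q n, cnt_le q n, ?_⟩
  ext r
  simp only [Set.mem_range, Set.mem_Icc]
  constructor
  · rintro ⟨i, rfl⟩
    exact ⟨omega_x_pos hq i, cnt_mono q (omega_q_pos hq i).2⟩
  · rintro ⟨hr1, hr2⟩
    obtain ⟨w, hw1, hw2, hw3⟩ := cnt_surj q hr1 hr2
    obtain ⟨i, rfl⟩ := (perm_range hq.1 w).2 ⟨hw1, hw2⟩
    exact ⟨i, hw3⟩

theorem omega_noflat {n : ℕ} {q : Fin n → ℕ} (hq : InOmega q) :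
    NoFlat (fun i => cnt q (q i)) := by
  intro i j hji he
  simp only at he
  have hij : i ≠ j := by
    intro h; rw [h] at hji; omega
  rcases lt_trichotomy (q i) (q j) with h | h | h
  · have hq1 := omega_q_pos hq i
    have hq2 := omega_q_pos hq j
    obtain ⟨c, hc⟩ := (perm_range hq.1 (q i + 1)).2 (by omega)
    have hsq : cnt q (q c) = cnt q (q i) := by
      rw [hc]; exact cnt_squeeze q (by omega) (by omega) he
    have hic : i < c := block_lt hq (by omega) (by omega)
    have hcj : c ≤ j := (block_order hq (by omega)).2 (by omega)
    have hcj' : c = j := by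
      apply Fin.ext
      have h1 : (i : ℕ) < (c : ℕ) := hic
      have h2 : (c : ℕ) ≤ (j : ℕ) := hcj
      omega
    have hdesc : DescVal q (q j) := by
      rw [show q j = q i + 1 by rw [← hcj'] at h ⊢; omega]
      apply (cnt_desc_iff q (q i)).1
      rw [show q i + 1 = q j by rw [← hcj'] at h ⊢; omega, ← he]
    obtain ⟨i', j', hj'i, hqi', hlt⟩ := hdesc
    have : i' = j := hq.1.1 hqi'
    subst this
    have : j' = i := by
      apply Fin.ext
      omega
    subst this
    omega
  · exact hij (hq.1.1 h)
  · have := block_lt hq h he.symm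
    have h1 : (j : ℕ) < (i : ℕ) := this
    omega

theorem omega_std {n : ℕ} {q : Fin n → ℕ} (hq : InOmega q) :
    Std (fun i => cnt q (q i)) = q := by
  classical
  funext i
  simp only [Std]
  have hA : (Finset.univ.filter fun j => cnt q (q j) < cnt q (q i)).card
      = ((Finset.Icc 1 n).filter fun v => cnt q v < cnt q (q i)).card :=
    perm_count hq.1 (fun v => cnt q v < cnt q (q i))
  have hBcong : (Finset.univ.filter fun j => j ≤ i ∧ cnt q (q j) = cnt q (q i))
      = (Finset.univ.filter fun j => q j ≤ q i ∧ cnt q (q j) = cnt q (q i)) := by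
    ext j
    simp only [Finset.mem_filter, Finset.mem_univ, true_and]
    constructor
    · rintro ⟨h1, h2⟩
      exact ⟨(block_order hq h2).1 h1, h2⟩
    · rintro ⟨h1, h2⟩
      exact ⟨(block_order hq h2).2 h1, h2⟩
  have hB : (Finset.univ.filter fun j => q j ≤ q i ∧ cnt q (q j) = cnt q (q i)).card
      = ((Finset.Icc 1 n).filter fun v => v ≤ q i ∧ cnt q v = cnt q (q i)).card :=
    perm_count hq.1 (fun v => v ≤ q i ∧ cnt q v = cnt q (q i))
  rw [hA, hBcong, hB]
  have hdisj : Disjoint ((Finset.Icc 1 n).filter fun v => cnt q v < cnt q (q i))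
      ((Finset.Icc 1 n).filter fun v => v ≤ q i ∧ cnt q v = cnt q (q i)) := by
    rw [Finset.disjoint_left]
    intro v hv1 hv2
    simp only [Finset.mem_filter] at hv1 hv2
    omega
  rw [← Finset.card_union_of_disjoint hdisj]
  have hqi := omega_q_pos hq i
  have hunion : ((Finset.Icc 1 n).filter fun v => cnt q v < cnt q (q i))
      ∪ ((Finset.Icc 1 n).filter fun v => v ≤ q i ∧ cnt q v = cnt q (q i))
      = Finset.Icc 1 (q i) := by
    ext v
    simp only [Finset.mem_union, Finset.mem_filter, Finset.mem_Icc]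
    constructor
    · rintro (⟨⟨hv1, hv2⟩, hv3⟩ | ⟨⟨hv1, hv2⟩, hv3, hv4⟩)
      · refine ⟨hv1, ?_⟩
        by_contra hc
        push_neg at hc
        have := cnt_mono q hc.le
        omega
      · exact ⟨hv1, hv3⟩
    · rintro ⟨hv1, hv2⟩
      have hvn : v ≤ n := by omega
      have := cnt_mono q hv2
      rcases eq_or_lt_of_le this with he | hlt
      · exact Or.inr ⟨⟨hv1, hvn⟩, hv2, he⟩
      · exact Or.inl ⟨⟨hv1, hvn⟩, hlt⟩
  rw [hunion, Nat.card_Icc]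
  omega

theorem omega_modasc {n : ℕ} {q : Fin n → ℕ} (hq : InOmega q) :
    AscTops (fun i => cnt q (q i)) = Nub (fun i => cnt q (q i)) := by
  ext i
  simp only [AscTops, Nub, Set.mem_setOf_eq]
  by_cases h0 : (i : ℕ) = 0
  · constructor
    · intro _ j hj
      have := Fin.lt_def.mp hj
      exfalso
      omega
    · intro _ j hj
      exfalso
      omega
  · have hj0lt : (i : ℕ) - 1 < n := by have := i.2; omega
    set j0 : Fin n := ⟨(i : ℕ) - 1, hj0lt⟩ with hj0def
    have hj0 : (j0 : ℕ) + 1 = (i : ℕ) := by simp [hj0def]; omega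
    have hqi := omega_q_pos hq i
    constructor
    · intro hasc t hti he
      have hlt := hasc j0 hj0
      have htne : t ≠ i := ne_of_lt hti
      have hqt := omega_q_pos hq t
      rcases lt_trichotomy (q t) (q i) with h | h | h
      · obtain ⟨c, hc⟩ := (perm_range hq.1 (q i - 1)).2 ⟨by omega, by omega⟩
        have hsq : cnt q (q i - 1) = cnt q (q t) :=
          cnt_squeeze q (show q t ≤ q i - 1 by omega) (show q i - 1 ≤ q i by omega)
            (by rw [he])
        have hdesc : DescVal q (q i) := by
          have h2 : cnt q ((q i - 1) + 1) = cnt q (q i - 1) := by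
            rw [show (q i - 1) + 1 = q i by omega]
            omega
          have := (cnt_desc_iff q (q i - 1)).1 h2
          rwa [show (q i - 1) + 1 = q i by omega] at this
        obtain ⟨i', j', hj'i, hqi', hlt'⟩ := hdesc
        have hii : i' = i := hq.1.1 hqi'
        subst hii
        have hjj : j' = j0 := Fin.ext (by simp [hj0def]; omega)
        subst hjj
        have := cnt_mono q hlt'.le
        omega
      · exact htne (hq.1.1 h)
      · have := block_lt hq h he.symm
        have h1 : (t : ℕ) < (i : ℕ) := Fin.lt_def.mp hti
        have h2 : (i : ℕ) < (t : ℕ) := Fin.lt_def.mp this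
        omega
    · intro hnub j hj
      have hjeq : j = j0 := Fin.ext (by simp [hj0def]; omega)
      subst hjeq
      by_contra hge
      push_neg at hge
      have hne : cnt q (q j0) ≠ cnt q (q i) := by
        have := omega_noflat hq j0 i (by omega)
        simpa using this
      have hlt : cnt q (q i) < cnt q (q j0) := by omega
      have hqlt : q i < q j0 := by
        by_contra hc
        push_neg at hc
        have := cnt_mono q hc
        omega
      have hdesc : DescVal q (q i) := ⟨i, j0, hj, rfl, hqlt⟩
      have hqi2 : 2 ≤ q i := by
        by_contra hc
        push_neg at hc
        have hq1 : q i = 1 := by omega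
        have hn : 0 < n := i.pos
        have : i = ⟨0, hn⟩ := hq.1.1 (by rw [hq1, hq.2.1 hn])
        rw [this] at h0
        exact h0 rfl
      have h2 : cnt q (q i - 1) = cnt q (q i) := by
        have := (cnt_desc_iff q (q i - 1)).2 (by
          rwa [show (q i - 1) + 1 = q i by omega])
        rw [show (q i - 1) + 1 = q i by omega] at this
        omega
      obtain ⟨t, ht⟩ := (perm_range hq.1 (q i - 1)).2 ⟨by omega, by omega⟩
      have htc : cnt q (q t) = cnt q (q i) := by rw [ht]; exact h2
      have hti : t < i := block_lt hq (by omega) htc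
      exact hnub t hti (by simpa using htc)

theorem exists_nub {n : ℕ} (x : Fin n → ℕ) {v : ℕ} (hv : ∃ t, x t = v) :
    ∃ t, t ∈ Nub x ∧ x t = v := by
  classical
  obtain ⟨t0, ht0⟩ := hv
  have hex : ∃ m : ℕ, ∃ hm : m < n, x ⟨m, hm⟩ = v := ⟨t0, t0.2, by simpa using ht0⟩
  obtain ⟨hmn, hxm⟩ := Nat.find_spec hex
  refine ⟨⟨Nat.find hex, hmn⟩, ?_, hxm⟩
  intro j hj he
  have hjv : x j = v := by rw [he, hxm]
  exact Nat.find_min hex (m := (j : ℕ)) (Fin.lt_def.mp hj) ⟨j.2, by simpa using hjv⟩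

theorem asctop_pred {n : ℕ} (x : Fin n → ℕ) {j : Fin n} (h0 : (j : ℕ) ≠ 0)
    (hlt : (j : ℕ) - 1 < n) : j ∈ AscTops x ↔ x ⟨(j : ℕ) - 1, hlt⟩ < x j := by
  constructor
  · intro h
    exact h ⟨(j : ℕ) - 1, hlt⟩ (by simp; omega)
  · intro h j' hj'
    have : j' = ⟨(j : ℕ) - 1, hlt⟩ := Fin.ext (by simp; omega)
    rwa [this]

theorem prim_descval_iff {n : ℕ} {x : Fin n → ℕ} (hx : IsPrim x) (j : Fin n) :
    ¬ DescVal (Std x) (Std x j) ↔ j ∈ Nub x := by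
  by_cases h0 : (j : ℕ) = 0
  · constructor
    · intro _ t ht
      have := Fin.lt_def.mp ht
      exfalso; omega
    · intro _ hd
      obtain ⟨i', j', hj'i, hqi', hlt⟩ := hd
      have : i' = j := std_inj x hqi'
      subst this
      omega
  · have hlt1 : (j : ℕ) - 1 < n := by have := j.2; omega
    set j0 : Fin n := ⟨(j : ℕ) - 1, hlt1⟩ with hj0def
    have hj0 : (j0 : ℕ) + 1 = (j : ℕ) := by simp [hj0def]; omega
    have hflat : x j0 ≠ x j := hx.2 j0 j (by omega)
    have hdesc_iff : DescVal (Std x) (Std x j) ↔ Std x j < Std x j0 := by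
      constructor
      · rintro ⟨i', j', hj'i, hqi', hlt⟩
        have : i' = j := std_inj x hqi'
        subst this
        have : j' = j0 := Fin.ext (by simp [hj0def]; omega)
        subst this
        exact hlt
      · intro h
        exact ⟨j, j0, hj0, rfl, h⟩
    have hasc_iff : j ∈ AscTops x ↔ x j0 < x j := asctop_pred x h0 hlt1
    rw [hdesc_iff, ← hx.1.2]
    rw [hasc_iff]
    rw [std_lt_iff]
    constructor
    · intro h
      rcases lt_trichotomy (x j0) (x j) with h1 | h1 | h1
      · exact h1
      · exact absurd h1 hflat
      · exfalso
        apply h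
        left
        exact h1
    · intro h hcon
      rcases hcon with h1 | ⟨h1, h2⟩
      · omega
      · have := Fin.lt_def.mp h2
        omega

theorem prim_reconstruct {n : ℕ} {x : Fin n → ℕ} (hx : IsPrim x) (i : Fin n) :
    cnt (Std x) (Std x i) = x i := by
  classical
  have hqp : IsPerm (Std x) := std_isPerm x
  have hqin : Std x i ≤ n := (std_mem x i).2
  have step1 : cnt (Std x) (Std x i)
      = (Finset.univ.filter fun j => Std x j ≤ Std x i ∧ ¬ DescVal (Std x) (Std x j)).card := by
    rw [perm_count hqp (fun v => v ≤ Std x i ∧ ¬ DescVal (Std x) v)]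
    rw [cnt]
    congr 1
    ext v
    simp only [Finset.mem_filter, Finset.mem_Icc]
    constructor
    · rintro ⟨⟨h1, h2⟩, h3⟩
      exact ⟨⟨h1, by omega⟩, h2, h3⟩
    · rintro ⟨⟨h1, h2⟩, h3, h4⟩
      exact ⟨⟨h1, h3⟩, h4⟩
  have step2 : (Finset.univ.filter fun j => Std x j ≤ Std x i ∧ ¬ DescVal (Std x) (Std x j))
      = (Finset.univ.filter fun j => x j ≤ x i ∧ j ∈ Nub x) := by
    ext j
    simp only [Finset.mem_filter, Finset.mem_univ, true_and]
    rw [prim_descval_iff hx j]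
    constructor
    · rintro ⟨h1, h2⟩
      refine ⟨?_, h2⟩
      by_contra hc
      push_neg at hc
      have := std_lt x (a := i) (b := j) (Or.inl hc)
      omega
    · rintro ⟨h1, h2⟩
      refine ⟨?_, h2⟩
      rcases eq_or_lt_of_le h1 with he | hlt
      · have hji : j ≤ i := by
          by_contra hc
          push_neg at hc
          exact h2 i hc he.symm
        exact std_le x (Or.inr ⟨he, hji⟩)
      · exact (std_lt x (Or.inl hlt)).le
  rw [step1, step2]
  obtain ⟨k', hk', hr⟩ := hx.1.1
  have hxik : x i ≤ k' := by
    have : x i ∈ Set.Icc 1 k' := hr ▸ Set.mem_range_self i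
    exact this.2
  have hicc : (Finset.Icc 1 (x i)).card = x i := by rw [Nat.card_Icc]; omega
  have hbij : (Finset.univ.filter fun j => x j ≤ x i ∧ j ∈ Nub x).card
      = (Finset.Icc 1 (x i)).card := by
    apply Finset.card_bij (fun j _ => x j)
    · intro j hj
      simp only [Finset.mem_filter, Finset.mem_univ, true_and] at hj
      simp only [Finset.mem_Icc]
      exact ⟨cayley_pos hx.1.1 j, hj.1⟩
    · intro a ha b hb hab
      simp only [Finset.mem_filter, Finset.mem_univ, true_and] at ha hb
      rcases lt_trichotomy a b with h | h | h
      · exact absurd hab (hb.2 a h)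
      · exact h
      · exact absurd hab.symm (ha.2 b h)
    · intro v hv
      simp only [Finset.mem_Icc] at hv
      have hvr : v ∈ Set.range x := by
        rw [hr]
        exact Set.mem_Icc.2 ⟨hv.1, le_trans hv.2 hxik⟩
      obtain ⟨t, htnub, htv⟩ := exists_nub x hvr
      refine ⟨t, ?_, htv⟩
      simp only [Finset.mem_filter, Finset.mem_univ, true_and]
      exact ⟨by omega, htnub⟩
  rw [hbij, hicc]

/-- Transport theorem: for a permutation `p` of `{1,…,k}`,
standardization is a bijection from the primitive modified ascent sequences of
length `n` avoiding every pattern in `[p] = {x Cayley : st(x) = p}` onto the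
permutations in `Ω_n` avoiding the classical pattern `p`. -/
theorem transport {k : ℕ} (p : Fin k → ℕ) (hp : IsPerm p) (n : ℕ) :
    Set.BijOn (fun x => Std x)
      {x : Fin n → ℕ | IsPrim x ∧
        ∀ q : Fin k → ℕ, IsCayley q → Std q = p → Avoids x q}
      {q : Fin n → ℕ | InOmega q ∧ Avoids q p} := by
  refine ⟨?_, ?_, ?_⟩
  · rintro x ⟨hprim, havoid⟩
    refine ⟨prim_inOmega hprim, ?_⟩
    intro hcont
    obtain ⟨q', hcay, hstd, hcontx⟩ := exists_pattern hp hcont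
    exact havoid q' hcay hstd hcontx
  · rintro x1 ⟨h1, -⟩ x2 ⟨h2, -⟩ he
    simp only at he
    funext i
    have e1 := prim_reconstruct h1 i
    have e2 := prim_reconstruct h2 i
    rw [← e1, ← e2, he]
  · rintro q ⟨hq, havoid⟩
    refine ⟨fun i => cnt q (q i),
      ⟨⟨⟨omega_cayley hq, omega_modasc hq⟩, omega_noflat hq⟩, ?_⟩, omega_std hq⟩
    intro q' hcay hstd hcont
    apply havoid
    have := contains_std hcont hstd
    rwa [omega_std hq] at this
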